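/- In the abstract hypocoercivity framework, the operator ATΠ = (1 + (TΠ)*(TΠ))^{-1}(TΠ)*(TΠ) satisfies: if ‖TΠf‖² ≥ λ_M ‖Πf‖² for all f with Πf in the domain of T (macroscopic coercivity with constant λ_M > 0), then ⟨ATΠ f, f⟩ ≥ (λ_M/(1+λ_M)) ‖Πf‖² for all f. -/

import Mathlib

open scoped RealInnerProductSpace
open ContinuousLinearMap

private lemma stmt_2_aux (lam a b c : ℝ) (hlam : 0 < lam) (ha : 0 ≤ a) (hb : 0 ≤ b)
    (hc : 0 ≤ c) (h1 : lam * a ^ 2 ≤ b ^ 2) (h2 : b ^ 2 ≤ a * c) :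
    lam / (1 + lam) * (a ^ 2 + 2 * b ^ 2 + c ^ 2) ≤ b ^ 2 + c ^ 2 := by
  have hpos : (0:ℝ) < 1 + lam := by linarith
  have hkey : lam * b ^ 2 ≤ c ^ 2 := by
    rcases eq_or_lt_of_le hb with hb0 | hb0
    · have : b ^ 2 = 0 := by rw [← hb0]; ring
      rw [this]; nlinarith
    · nlinarith [sq_nonneg (a * c - b ^ 2), mul_pos hb0 hb0, sq_nonneg c,
        mul_nonneg ha hc]
  rw [div_mul_eq_mul_div, div_le_iff₀ hpos]
  nlinarith

/-- Macroscopic coercivity transfers to the operator `A T P = (1+(TP)*(TP))⁻¹ (TP)*(TP)`: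
if `‖T P f‖² ≥ λ_M ‖P f‖²` for all `f`, then `⟨A T P f, f⟩ ≥ (λ_M/(1+λ_M)) ‖P f‖²`. -/
theorem stmt_2 {H : Type*} [NormedAddCommGroup H] [InnerProductSpace ℝ H] [CompleteSpace H]
    (T P A : H →L[ℝ] H) (lam_M : ℝ) (hlam : 0 < lam_M)
    (hP_idem : P ∘L P = P)
    (hP_sa : ContinuousLinearMap.adjoint P = P)
    (hT_skew : ∀ f g, ⟪T f, g⟫ = -⟪f, T g⟫)
    (hPTP : P ∘L (T ∘L P) = 0)
    (hA : (1 + (ContinuousLinearMap.adjoint (T ∘L P)) ∘L (T ∘L P)) ∘L A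
        = ContinuousLinearMap.adjoint (T ∘L P))
    (hmacro : ∀ f : H, lam_M * ‖P f‖ ^ 2 ≤ ‖T (P f)‖ ^ 2) :
    ∀ f : H, lam_M / (1 + lam_M) * ‖P f‖ ^ 2 ≤ ⟪(A ∘L (T ∘L P)) f, f⟫ := by
  intro f
  set S : H →L[ℝ] H := T ∘L P with hSdef
  have hSP : S ∘L P = S := by rw [hSdef, comp_assoc, hP_idem]
  have hPadjS : P ∘L ContinuousLinearMap.adjoint S = ContinuousLinearMap.adjoint S := by
    rw [hSdef, adjoint_comp, hP_sa, ← comp_assoc, hP_idem]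
  set u : H := A (S f) with hu
  set v : H := f - u with hv
  set w : H := P v with hw
  -- from hA : u + S*(S u) = S*(S f)
  have h1 : u + ContinuousLinearMap.adjoint S (S u) = ContinuousLinearMap.adjoint S (S f) := by
    have := congrArg (fun M : H →L[ℝ] H => M (S f)) hA
    simpa [comp_apply, add_apply, one_apply] using this
  have hBv : ContinuousLinearMap.adjoint S (S v) = u := by
    have : S v = S f - S u := by rw [hv, map_sub]
    rw [this, map_sub, ← h1]
    abel
  have hSwv : S w = S v := by
    have := congrArg (fun M : H →L[ℝ] H => M v) hSP
    simpa [comp_apply] using this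
  have hBw : ContinuousLinearMap.adjoint S (S w) = u := by rw [hSwv, hBv]
  have hPu : P u = u := by
    rw [← hBw]
    have := congrArg (fun M : H →L[ℝ] H => M (S w)) hPadjS
    simpa [comp_apply] using this
  have hPf : P f = w + u := by
    have : f = v + u := by rw [hv]; abel
    rw [this, map_add, hPu, hw]
  have hinner_wu : ⟪w, u⟫ = ‖S w‖ ^ 2 := by
    rw [← hBw, ContinuousLinearMap.adjoint_inner_right, real_inner_self_eq_norm_sq]
  have hinner_uv : ⟪u, v⟫ = ‖S w‖ ^ 2 := by
    rw [← hBw, ContinuousLinearMap.adjoint_inner_left, hSwv, real_inner_self_eq_norm_sq]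
  have hLHS : ⟪(A ∘L (T ∘L P)) f, f⟫ = ‖S w‖ ^ 2 + ‖u‖ ^ 2 := by
    have hf : f = v + u := by rw [hv]; abel
    have : (A ∘L (T ∘L P)) f = u := by simp [comp_apply, hu, hSdef]
    rw [this]
    conv_lhs => rw [hf]
    rw [inner_add_right, hinner_uv, real_inner_self_eq_norm_sq]
  have hnormPf : ‖P f‖ ^ 2 = ‖w‖ ^ 2 + 2 * ‖S w‖ ^ 2 + ‖u‖ ^ 2 := by
    rw [hPf, norm_add_sq_real, hinner_wu]
  -- macroscopic coercivity at v
  have hmac : lam_M * ‖w‖ ^ 2 ≤ ‖S w‖ ^ 2 := by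
    have := hmacro v
    have hTv : T (P v) = S w := by
      rw [hSwv]; simp [hSdef, comp_apply]
    rw [hTv] at this
    simpa [hw] using this
  -- Cauchy-Schwarz : ‖S w‖² = ⟪w, u⟫ ≤ ‖w‖ * ‖u‖
  have hcs : ‖S w‖ ^ 2 ≤ ‖w‖ * ‖u‖ := by
    rw [← hinner_wu]; exact real_inner_le_norm w u
  have hpos : (0:ℝ) < 1 + lam_M := by linarith
  rw [hLHS, hnormPf]
  exact stmt_2_aux lam_M ‖w‖ ‖S w‖ ‖u‖ hlam (norm_nonneg _) (norm_nonneg _) (norm_nonneg _)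
    hmac hcs
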